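/- Let s_1 and s_2 be coprime nonzero integers and let Γ_{s_1,s_2} = {(θ_1, θ_2) ∈ T^2 : s_1θ_1 + s_2θ_2 = 0 in ℝ/ℤ}. Then Γ_{s_1,s_2} ∩ Π_3 = ∅ if and only if s_1 s_2 > 0 and |s_1| + |s_2| ≤ 3, i.e., if and only if the slope s = −s_1/s_2 belongs to {−1, −2, −1/2}. -/

import Mathlib

noncomputable section

/-- The two-dimensional torus `T² = (ℝ/ℤ)²`. -/
abbrev T2 := AddCircle (1 : ℝ) × AddCircle (1 : ℝ)

/-- The subgroup `Γ_{s₁,s₂} = {(θ₁, θ₂) ∈ T² : s₁θ₁ + s₂θ₂ = 0}`. -/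
def GammaSlope (s1 s2 : ℤ) : Set T2 := {θ : T2 | s1 • θ.1 + s2 • θ.2 = 0}

/-- `Π_r ⊂ T²`, the image under `q` of the open square `(0, 1/r)²`. -/
def PiSquare (r : ℕ) : Set T2 :=
  {θ : T2 | ∃ x y : ℝ, 0 < x ∧ x < 1 / (r : ℝ) ∧ 0 < y ∧ y < 1 / (r : ℝ) ∧
    θ = ((x : AddCircle (1 : ℝ)), (y : AddCircle (1 : ℝ)))}

lemma gamma_mem (s1 s2 : ℤ) (x y : ℝ) :
    ((x : AddCircle (1:ℝ)), (y : AddCircle (1:ℝ))) ∈ GammaSlope s1 s2 ↔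
      ∃ n : ℤ, s1 * x + s2 * y = n := by
  simp only [GammaSlope, Set.mem_setOf_eq]
  rw [← AddCircle.coe_zsmul, ← AddCircle.coe_zsmul, ← AddCircle.coe_add,
    AddCircle.coe_eq_zero_iff]
  constructor
  · rintro ⟨n, hn⟩
    simp only [zsmul_eq_mul, smul_eq_mul, mul_one] at hn
    exact ⟨n, by linarith⟩
  · rintro ⟨n, hn⟩
    refine ⟨n, ?_⟩
    simp only [zsmul_eq_mul, smul_eq_mul, mul_one]
    linarith

lemma inter_empty_iff (s1 s2 : ℤ) :
    GammaSlope s1 s2 ∩ PiSquare 3 = ∅ ↔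
      ∀ x y : ℝ, 0 < x → x < 1/3 → 0 < y → y < 1/3 → ∀ n : ℤ, s1*x + s2*y ≠ (n:ℝ) := by
  rw [Set.eq_empty_iff_forall_notMem]
  constructor
  · intro h x y hx hx3 hy hy3 n hn
    refine h ((x : AddCircle (1:ℝ)), (y : AddCircle (1:ℝ))) ⟨?_, ?_⟩
    · exact (gamma_mem s1 s2 x y).2 ⟨n, hn⟩
    · exact ⟨x, y, hx, by norm_num [hx3], hy, by norm_num [hy3], rfl⟩
  · rintro h θ ⟨hg, x, y, hx, hx3, hy, hy3, rfl⟩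
    obtain ⟨n, hn⟩ := (gamma_mem s1 s2 x y).1 hg
    exact h x y hx (by norm_num at hx3 ⊢; linarith) hy (by norm_num at hy3 ⊢; linarith) n hn

/-- For coprime nonzero integers `s₁, s₂`, the subgroup `Γ_{s₁,s₂}` misses `Π₃` iff
`s₁ s₂ > 0` and `|s₁| + |s₂| ≤ 3`, i.e. iff the slope `s = -s₁/s₂ ∈ {-1, -2, -1/2}`. -/
theorem gammaSlope_inter_piSquare_three_eq_empty_iff
    (s1 s2 : ℤ) (h1 : s1 ≠ 0) (h2 : s2 ≠ 0) (hco : IsCoprime s1 s2) :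
    GammaSlope s1 s2 ∩ PiSquare 3 = ∅ ↔ (0 < s1 * s2 ∧ |s1| + |s2| ≤ 3) := by
  rw [inter_empty_iff]
  constructor
  · intro h
    by_contra hC
    push_neg at hC
    rcases lt_trichotomy (s1 * s2) 0 with hneg | hz | hpos
    · -- opposite signs: hit n = 0
      have ha : (0:ℝ) < |(s1:ℝ)| := by simp [abs_pos]; exact_mod_cast h1
      have hb : (0:ℝ) < |(s2:ℝ)| := by simp [abs_pos]; exact_mod_cast h2
      set a : ℝ := |(s1:ℝ)| with hadef
      set b : ℝ := |(s2:ℝ)| with hbdef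
      have hab : (0:ℝ) < a + b := by linarith
      have hkey : (s1:ℝ) * b + (s2:ℝ) * a = 0 := by
        rcases lt_or_gt_of_ne h1 with hs1 | hs1
        · have hs2 : 0 < s2 := by nlinarith
          have hs1R : (s1:ℝ) < 0 := by exact_mod_cast hs1
          have hs2R : (0:ℝ) < (s2:ℝ) := by exact_mod_cast hs2
          rw [hadef, hbdef, abs_of_neg hs1R, abs_of_pos hs2R]; ring
        · have hs2 : s2 < 0 := by nlinarith
          have hs1R : (0:ℝ) < (s1:ℝ) := by exact_mod_cast hs1
          have hs2R : (s2:ℝ) < 0 := by exact_mod_cast hs2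
          rw [hadef, hbdef, abs_of_pos hs1R, abs_of_neg hs2R]; ring
      refine h (b/(3*(a+b))) (a/(3*(a+b))) (by positivity) ?_ (by positivity) ?_ 0 ?_
      · rw [div_lt_iff₀ (by positivity)]; nlinarith
      · rw [div_lt_iff₀ (by positivity)]; nlinarith
      · push_cast
        field_simp
        linarith [hkey]
    · exact absurd hz (mul_ne_zero h1 h2)
    · -- same signs, |s1|+|s2| ≥ 4 : hit n = ±1
      have hsum := hC hpos
      have hc4 : (4:ℤ) ≤ |s1| + |s2| := by omega
      have hcR : (4:ℝ) ≤ ((|s1| + |s2| : ℤ) : ℝ) := by exact_mod_cast hc4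
      set c : ℝ := ((|s1| + |s2| : ℤ) : ℝ) with hcdef
      have hc0 : (0:ℝ) < c := by linarith
      have hlt : 1/c < 1/3 := by rw [div_lt_div_iff₀ hc0 (by norm_num)]; linarith
      rcases lt_or_gt_of_ne h1 with hs1 | hs1
      · have hs2 : s2 < 0 := by nlinarith
        refine h (1/c) (1/c) (by positivity) hlt (by positivity) hlt (-1) ?_
        have hcval : c = -((s1:ℝ) + s2) := by
          rw [hcdef, abs_of_neg hs1, abs_of_neg hs2]; push_cast; ring
        have hne : (s1:ℝ) + s2 ≠ 0 := by rw [hcval] at hc0; intro hh; rw [hh] at hc0; norm_num at hc0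
        rw [hcval]; push_cast; field_simp
        ring
      · have hs2 : 0 < s2 := by nlinarith
        refine h (1/c) (1/c) (by positivity) hlt (by positivity) hlt 1 ?_
        have hcval : c = (s1:ℝ) + s2 := by
          rw [hcdef, abs_of_pos hs1, abs_of_pos hs2]; push_cast; ring
        have hne : (s1:ℝ) + s2 ≠ 0 := by rw [hcval] at hc0; intro hh; rw [hh] at hc0; norm_num at hc0
        rw [hcval]; push_cast; field_simp
  · rintro ⟨hpos, hsum⟩ x y hx hx3 hy hy3 n hn
    rcases lt_or_gt_of_ne h1 with hs1 | hs1
    · have hs2 : s2 < 0 := by nlinarith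
      rw [abs_of_neg hs1, abs_of_neg hs2] at hsum
      have e1 : (s1:ℝ) ≤ -1 := by exact_mod_cast (show s1 ≤ -1 by omega)
      have e2 : (s2:ℝ) ≤ -1 := by exact_mod_cast (show s2 ≤ -1 by omega)
      have e3 : (-3:ℝ) ≤ (s1:ℝ) + s2 := by
        have : -3 ≤ s1 + s2 := by omega
        exact_mod_cast this
      have b1 : (-1:ℝ) < (n:ℝ) := by nlinarith
      have b2 : (n:ℝ) < 0 := by nlinarith
      have c1 : (-1:ℤ) < n := by exact_mod_cast b1
      have c2 : n < 0 := by exact_mod_cast b2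
      omega
    · have hs2 : 0 < s2 := by nlinarith
      rw [abs_of_pos hs1, abs_of_pos hs2] at hsum
      have e1 : (1:ℝ) ≤ (s1:ℝ) := by exact_mod_cast hs1
      have e2 : (1:ℝ) ≤ (s2:ℝ) := by exact_mod_cast hs2
      have e3 : (s1:ℝ) + s2 ≤ 3 := by exact_mod_cast hsum
      have b1 : (0:ℝ) < (n:ℝ) := by nlinarith
      have b2 : (n:ℝ) < 1 := by nlinarith
      have c1 : (0:ℤ) < n := by exact_mod_cast b1
      have c2 : n < 1 := by exact_mod_cast b2
      omega
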